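/- arXiv:1110.2284 — 6 statements merged into one kernel-verified Lean document; each statement's English description precedes it below -/
import Mathlib

section
/- Let k be a field, C a k-coalgebra and C* its dual convolution algebra. Every left annihilator in C* is closed in the finite topology: if H ⊆ C* and I = {f ∈ C* : f*h = 0 for all h ∈ H}, then I = X^⊥ for the subspace X = Σ_{h∈H} span{Σ c₁ h(c₂) : c ∈ C} of C; in particular I = (I^⊥)^⊥. -/
open TensorProduct Coalgebra

noncomputable section

namespace Paper

variable {k : Type*} [Field k] {C : Type*} [AddCommGroup C] [Module k C] [Coalgebra k C]

/-- The convolution product on the dual of a coalgebra. -/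
def conv (f g : Module.Dual k C) : Module.Dual k C :=
  LinearMap.mul' k k ∘ₗ TensorProduct.map f g ∘ₗ comul

lemma conv_apply (f g : Module.Dual k C) (c : C) :
    conv f g c = LinearMap.mul' k k (TensorProduct.map f g (comul c)) := rfl

private lemma conv_assoc (f g h : Module.Dual k C) : conv (conv f g) h = conv f (conv g h) := by
  have h1 : (LinearMap.mul' k k ∘ₗ TensorProduct.map (conv f g) h : C ⊗[k] C →ₗ[k] k)
      = (LinearMap.mul' k k ∘ₗ TensorProduct.map
          (LinearMap.mul' k k ∘ₗ TensorProduct.map f g) h)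
        ∘ₗ (comul (R := k) (A := C)).rTensor C := by
    ext x y
    simp [conv_apply]
  have h2 : (LinearMap.mul' k k ∘ₗ TensorProduct.map f (conv g h) : C ⊗[k] C →ₗ[k] k)
      = (LinearMap.mul' k k ∘ₗ TensorProduct.map f
          (LinearMap.mul' k k ∘ₗ TensorProduct.map g h))
        ∘ₗ (comul (R := k) (A := C)).lTensor C := by
    ext x y
    simp [conv_apply]
  have h3 : (LinearMap.mul' k k ∘ₗ TensorProduct.map f
          (LinearMap.mul' k k ∘ₗ TensorProduct.map g h))
        ∘ₗ (TensorProduct.assoc k C C C).toLinearMap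
      = LinearMap.mul' k k ∘ₗ TensorProduct.map
          (LinearMap.mul' k k ∘ₗ TensorProduct.map f g) h := by
    apply TensorProduct.ext_threefold
    intro x y z
    simp [mul_assoc]
  ext c
  have e1 : conv (conv f g) h c
      = (LinearMap.mul' k k ∘ₗ TensorProduct.map (conv f g) h) (comul c) := rfl
  have e2 : conv f (conv g h) c
      = (LinearMap.mul' k k ∘ₗ TensorProduct.map f (conv g h)) (comul c) := rfl
  rw [e1, e2, h1, h2]
  simp only [LinearMap.comp_apply]
  rw [← Coalgebra.coassoc_apply (R := k) c]
  exact (LinearMap.congr_fun h3 ((comul (R := k) (A := C)).rTensor C (comul c))).symm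

private lemma counit_conv (f : Module.Dual k C) : conv counit f = f := by
  have h1 : (TensorProduct.map (counit (R := k) (A := C)) f : C ⊗[k] C →ₗ[k] k ⊗[k] k)
      = f.lTensor k ∘ₗ (counit (R := k) (A := C)).rTensor C := by
    ext x y
    simp
  ext c
  rw [conv_apply, h1, LinearMap.comp_apply, Coalgebra.rTensor_counit_comul,
    LinearMap.lTensor_tmul, LinearMap.mul'_apply, one_mul]

private lemma conv_counit (f : Module.Dual k C) : conv f counit = f := by
  have h1 : (TensorProduct.map f (counit (R := k) (A := C)) : C ⊗[k] C →ₗ[k] k ⊗[k] k)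
      = f.rTensor k ∘ₗ (counit (R := k) (A := C)).lTensor C := by
    ext x y
    simp
  ext c
  rw [conv_apply, h1, LinearMap.comp_apply, Coalgebra.lTensor_counit_comul,
    LinearMap.rTensor_tmul, LinearMap.mul'_apply, mul_one]

private lemma conv_add (f g h : Module.Dual k C) : conv f (g + h) = conv f g + conv f h := by
  ext c
  simp only [conv_apply, TensorProduct.map_add_right, LinearMap.add_apply, map_add]

private lemma add_conv (f g h : Module.Dual k C) : conv (f + g) h = conv f h + conv g h := by
  ext c
  simp only [conv_apply, TensorProduct.map_add_left, LinearMap.add_apply, map_add]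

private lemma zero_conv (f : Module.Dual k C) : conv 0 f = 0 := by
  ext c
  have : TensorProduct.map (0 : Module.Dual k C) f = 0 := by
    ext x y; simp
  simp [conv_apply, this]

private lemma conv_zero (f : Module.Dual k C) : conv f 0 = 0 := by
  ext c
  have : TensorProduct.map f (0 : Module.Dual k C) = 0 := by
    ext x y; simp
  simp [conv_apply, this]

/-- The convolution algebra structure on the dual of a coalgebra. -/
instance instRingDual : Ring (Module.Dual k C) where
  __ := (inferInstance : AddCommGroup (Module.Dual k C))
  mul := conv
  one := counit
  mul_assoc := conv_assoc
  one_mul := counit_conv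
  mul_one := conv_counit
  left_distrib := conv_add
  right_distrib := add_conv
  zero_mul := zero_conv
  mul_zero := conv_zero

lemma dual_mul_def (f g : Module.Dual k C) : f * g = conv f g := rfl

lemma dual_mul_apply (f g : Module.Dual k C) (c : C) :
    (f * g) c = LinearMap.mul' k k (TensorProduct.map f g (comul c)) := rfl

lemma dual_one_def : (1 : Module.Dual k C) = counit := rfl

variable {k : Type*} [Field k] {C : Type*} [AddCommGroup C] [Module k C] [Coalgebra k C]

instance : IsScalarTower k (Module.Dual k C) (Module.Dual k C) :=
  ⟨fun a f g => by
    show conv (a • f) g = a • conv f g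
    ext c
    simp [conv_apply, TensorProduct.map_smul_left]⟩

/-- For a subset `X ⊆ C`, its orthogonal `X^⊥ ⊆ C*`. -/
def perpC (X : Set C) : Set (Module.Dual k C) := {f | ∀ x ∈ X, f x = 0}

/-- For a subset `Y ⊆ C*`, its orthogonal `Y^⊥ ⊆ C`. -/
def perpD (Y : Set (Module.Dual k C)) : Set C := {c | ∀ f ∈ Y, f c = 0}

/-- For `h ∈ C*`, the map `c ↦ ∑ c₁ h(c₂)`; this is the canonical left action of `C*` on `C`. -/
def wedge (h : Module.Dual k C) : C →ₗ[k] C :=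
  (TensorProduct.rid k C).toLinearMap ∘ₗ h.lTensor C ∘ₗ comul

variable (k C) in
/-- A left `C*`-module `M` is rational if every element `m` admits finitely many
`mᵢ ∈ M`, `cᵢ ∈ C` with `f • m = ∑ᵢ f(cᵢ) • mᵢ` for all `f ∈ C*` (the scalar
`f (cs i) ∈ k` acting through the `k`-multiple `f (cs i) • 1` of the identity of `C*`). -/
def IsRationalLeft (M : Type*) [AddCommGroup M] [Module (Module.Dual k C) M] : Prop :=
  ∀ m : M, ∃ (n : ℕ) (ms : Fin n → M) (cs : Fin n → C),
    ∀ f : Module.Dual k C, f • m = ∑ i, (f (cs i) • (1 : Module.Dual k C)) • ms i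

variable (k C) in
/-- A right `C*`-module (i.e. a left module over the opposite ring) `M` is rational if every
element `m` admits finitely many `mᵢ ∈ M`, `cᵢ ∈ C` with `m • f = ∑ᵢ f(cᵢ) • mᵢ` for all
`f ∈ C*`. -/
def IsRationalRight (M : Type*) [AddCommGroup M] [Module (Module.Dual k C)ᵐᵒᵖ M] : Prop :=
  ∀ m : M, ∃ (n : ℕ) (ms : Fin n → M) (cs : Fin n → C),
    ∀ f : Module.Dual k C,
      (MulOpposite.op f) • m
        = ∑ i, (MulOpposite.op (f (cs i) • (1 : Module.Dual k C))) • ms i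

/-- A ring `R` is a left D-ring if every left ideal is a left annihilator. -/
def IsLeftDRing (R : Type*) [Ring R] : Prop :=
  ∀ I : Ideal R, ∃ H : Set R, (I : Set R) = {r : R | ∀ h ∈ H, r * h = 0}
universe v

private lemma mul_apply_eq_wedge {k : Type*} [Field k] {C : Type*} [AddCommGroup C] [Module k C]
    [Coalgebra k C] (f h : Module.Dual k C) (c : C) : (f * h) c = f (wedge h c) := by
  have key : (LinearMap.mul' k k ∘ₗ TensorProduct.map f h : C ⊗[k] C →ₗ[k] k)
      = f ∘ₗ (TensorProduct.rid k C).toLinearMap ∘ₗ h.lTensor C := by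
    ext x y
    simp [mul_comm]
  rw [dual_mul_apply]
  have := LinearMap.congr_fun key (comul (R := k) c)
  simpa [wedge] using this

/-- Every left annihilator in `C*` is closed in the finite topology:
if `I = {f : ∀ h ∈ H, f * h = 0}` then `I = X^⊥` for
`X = Σ_{h ∈ H} span {Σ c₁ h(c₂) : c ∈ C}`, and in particular `I = (I^⊥)^⊥`. -/
theorem statement0 {k : Type*} [Field k] {C : Type*} [AddCommGroup C] [Module k C]
    [Coalgebra k C] (H : Set (Module.Dual k C)) :
    {f : Module.Dual k C | ∀ h ∈ H, f * h = 0}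
        = perpC ((⨆ h ∈ H, Submodule.span k (Set.range fun c : C => wedge h c) :
            Submodule k C) : Set C) ∧
    {f : Module.Dual k C | ∀ h ∈ H, f * h = 0}
        = perpC (perpD {f : Module.Dual k C | ∀ h ∈ H, f * h = 0}) := by
  have hmain : {f : Module.Dual k C | ∀ h ∈ H, f * h = 0}
      = perpC ((⨆ h ∈ H, Submodule.span k (Set.range fun c : C => wedge h c) :
          Submodule k C) : Set C) := by
    ext f
    simp only [Set.mem_setOf_eq, perpC, SetLike.mem_coe]
    constructor
    · intro hf x hx
      have : (⨆ h ∈ H, Submodule.span k (Set.range fun c : C => wedge h c) :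
          Submodule k C) ≤ LinearMap.ker f := by
        refine iSup_le fun h => iSup_le fun hh => Submodule.span_le.2 ?_
        rintro _ ⟨c, rfl⟩
        have := congr_fun (congrArg DFunLike.coe (hf h hh)) c
        simpa [LinearMap.mem_ker, mul_apply_eq_wedge] using this
      exact this hx
    · intro hf h hh
      ext c
      have : wedge h c ∈ (⨆ h ∈ H, Submodule.span k
          (Set.range fun c : C => wedge h c) : Submodule k C) := by
        refine Submodule.mem_iSup_of_mem h (Submodule.mem_iSup_of_mem hh ?_)
        exact Submodule.subset_span ⟨c, rfl⟩
      simpa [mul_apply_eq_wedge] using hf _ this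
  refine ⟨hmain, Set.Subset.antisymm ?_ ?_⟩
  · intro f hf c hc
    exact hc f hf
  · intro f hf
    rw [hmain]
    intro x hx
    refine hf x fun g hg => ?_
    rw [hmain] at hg
    exact hg x hx

end Paper
end
end

section
/- Let k be a field, C a k-coalgebra and C* its dual convolution algebra. Let (I_n)_{n∈ℕ} be an ascending chain I_n ⊆ I_{n+1} of closed left ideals of C* (each satisfying I_n = (I_n^⊥)^⊥). Then the union ⋃_n I_n is closed (i.e. equals its double perp) if and only if the chain is eventually stationary, i.e. there is N with I_n = I_N for all n ≥ N. -/
open TensorProduct Coalgebra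

noncomputable section

namespace Paper

variable {k : Type*} [Field k] {C : Type*} [AddCommGroup C] [Module k C] [Coalgebra k C]

variable {k : Type*} [Field k] {C : Type*} [AddCommGroup C] [Module k C] [Coalgebra k C]

/-- The orthogonal of an ideal of `C*`, as a `k`-submodule of `C`. -/
private def perpSubmod (J : Ideal (Module.Dual k C)) : Submodule k C where
  carrier := {c | ∀ f ∈ (J : Set (Module.Dual k C)), f c = 0}
  add_mem' := by
    intro a b ha hb f hf
    simp [map_add, ha f hf, hb f hf]
  zero_mem' := by
    intro f _
    exact map_zero f
  smul_mem' := by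
    intro a c hc f hf
    simp [map_smul, hc f hf]

private lemma mem_perpSubmod {J : Ideal (Module.Dual k C)} {c : C} :
    c ∈ perpSubmod J ↔ ∀ f ∈ (J : Set (Module.Dual k C)), f c = 0 := Iff.rfl

private lemma perpD_eq_perpSubmod (J : Ideal (Module.Dual k C)) :
    perpD (J : Set (Module.Dual k C)) = (perpSubmod J : Set C) := rfl

/-- If `(I_n)` is an ascending chain of closed left ideals of `C*`, then
`⋃_n I_n` is closed iff the chain is eventually stationary. -/
theorem statement1 {k : Type*} [Field k] {C : Type*} [AddCommGroup C] [Module k C]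
    [Coalgebra k C] (I : ℕ → Ideal (Module.Dual k C))
    (hchain : ∀ n, I n ≤ I (n + 1))
    (hclosed : ∀ n, (I n : Set (Module.Dual k C))
      = perpC (perpD (I n : Set (Module.Dual k C)))) :
    (⋃ n, (I n : Set (Module.Dual k C)))
        = perpC (perpD (⋃ n, (I n : Set (Module.Dual k C)))) ↔
      ∃ N, ∀ n, N ≤ n → I n = I N := by
  classical
  have Imono : Monotone I := monotone_nat_of_le_succ hchain
  constructor
  · -- union closed → stationary
    intro hU
    by_contra hstat
    push_neg at hstat
    have key : ∀ N : ℕ, ∃ n, N ≤ n ∧ I N < I n := by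
      intro N
      obtain ⟨n, hn, hne⟩ := hstat N
      exact ⟨n, hn, lt_of_le_of_ne (Imono hn) (Ne.symm hne)⟩
    -- a subsequence along which the chain is strictly increasing
    let φ : ℕ → ℕ := fun j => Nat.rec 0 (fun _ m => (key m).choose) j
    have hφsucc : ∀ j, φ j ≤ φ (j + 1) ∧ I (φ j) < I (φ (j + 1)) :=
      fun j => (key (φ j)).choose_spec
    have hφstrict : StrictMono φ := by
      apply strictMono_nat_of_lt_succ
      intro j
      rcases lt_or_eq_of_le (hφsucc j).1 with h | h
      · exact h
      · exact absurd ((hφsucc j).2) (by rw [h]; exact lt_irrefl _)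
    have hφle : ∀ j, j ≤ φ j := fun j => hφstrict.le_apply
    -- the perps, strictly decreasing
    set D : ℕ → Submodule k C := fun j => perpSubmod (I (φ j)) with hDdef
    have hDanti : ∀ i j : ℕ, i ≤ j → D j ≤ D i := by
      intro i j hij c hc f hf
      exact hc f (Imono (hφstrict.monotone hij) hf)
    have hDlt : ∀ j, D (j + 1) < D j := by
      intro j
      refine lt_of_le_of_ne (hDanti j (j + 1) (Nat.le_succ j)) ?_
      intro he
      have hsets : (I (φ (j + 1)) : Set (Module.Dual k C)) = I (φ j) := by
        calc (I (φ (j + 1)) : Set (Module.Dual k C))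
            = perpC (perpD (I (φ (j + 1)) : Set (Module.Dual k C))) := hclosed _
          _ = perpC (perpD (I (φ j) : Set (Module.Dual k C))) := by
              rw [perpD_eq_perpSubmod, perpD_eq_perpSubmod]
              exact congrArg (fun W : Submodule k C => perpC (W : Set C)) he
          _ = (I (φ j) : Set (Module.Dual k C)) := (hclosed _).symm
      exact absurd (SetLike.ext' hsets) (ne_of_gt (hφsucc j).2)
    -- witnesses
    have hx : ∀ j, ∃ c, c ∈ D j ∧ c ∉ D (j + 1) := by
      intro j
      obtain ⟨c, hc1, hc2⟩ := SetLike.exists_of_lt (hDlt j)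
      exact ⟨c, hc1, hc2⟩
    let x : ℕ → C := fun j => (hx j).choose
    have hx1 : ∀ j, x j ∈ D j := fun j => (hx j).choose_spec.1
    have hx2 : ∀ j, x j ∉ D (j + 1) := fun j => (hx j).choose_spec.2
    set Dinf : Submodule k C := ⨅ j, D j with hDinf
    have hDinf_le : ∀ j, Dinf ≤ D j := fun j => iInf_le _ j
    set v : ℕ → C ⧸ Dinf := fun j => Dinf.mkQ (x j) with hv
    -- linear independence of the images in the quotient
    have li : LinearIndependent k v := by
      rw [linearIndependent_iff']
      intro s g hsum
      by_contra hex
      push_neg at hex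
      obtain ⟨i0, hi0s, hi0⟩ := hex
      set t : Finset ℕ := s.filter (fun i => g i ≠ 0) with ht
      have htne : t.Nonempty := ⟨i0, Finset.mem_filter.mpr ⟨hi0s, hi0⟩⟩
      set j0 : ℕ := t.min' htne with hj0
      have hj0t : j0 ∈ t := t.min'_mem htne
      have hj0s : j0 ∈ s := (Finset.mem_filter.mp hj0t).1
      have hgj0 : g j0 ≠ 0 := (Finset.mem_filter.mp hj0t).2
      have hsum' : (∑ i ∈ s, g i • x i) ∈ Dinf := by
        have : Dinf.mkQ (∑ i ∈ s, g i • x i) = 0 := by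
          rw [map_sum]
          simpa only [map_smul] using hsum
        exact (Submodule.Quotient.mk_eq_zero _).mp this
      have herase : (∑ i ∈ s.erase j0, g i • x i) ∈ D (j0 + 1) := by
        apply Submodule.sum_mem
        intro i hi
        rcases eq_or_ne (g i) 0 with h0 | h0
        · rw [h0, zero_smul]; exact Submodule.zero_mem _
        · have his : i ∈ s := Finset.mem_of_mem_erase hi
          have hit : i ∈ t := Finset.mem_filter.mpr ⟨his, h0⟩
          have : j0 ≤ i := t.min'_le i hit
          have hlt : j0 < i := lt_of_le_of_ne this (Ne.symm (Finset.ne_of_mem_erase hi))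
          exact Submodule.smul_mem _ _ (hDanti (j0 + 1) i hlt (hx1 i))
      have hterm : g j0 • x j0 ∈ D (j0 + 1) := by
        have heq : g j0 • x j0 = (∑ i ∈ s, g i • x i) - ∑ i ∈ s.erase j0, g i • x i := by
          rw [← Finset.add_sum_erase s (fun i => g i • x i) hj0s]
          abel
        rw [heq]
        exact Submodule.sub_mem _ (hDinf_le (j0 + 1) hsum') herase
      have : x j0 ∈ D (j0 + 1) := by
        have := Submodule.smul_mem _ (g j0)⁻¹ hterm
        rwa [smul_smul, inv_mul_cancel₀ hgj0, one_smul] at this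
      exact hx2 j0 this
    -- a functional sending every `v j` to 1
    set S : Submodule k (C ⧸ Dinf) := Submodule.span k (Set.range v) with hS
    let g0 : S →ₗ[k] k :=
      (Finsupp.linearCombination k (fun _ : ℕ => (1 : k))).comp li.repr
    obtain ⟨g, hg⟩ := LinearMap.exists_extend g0
    set f : Module.Dual k C := g ∘ₗ Dinf.mkQ with hf
    have hfx : ∀ j, f (x j) = 1 := by
      intro j
      have hvj : v j ∈ S := Submodule.subset_span ⟨j, rfl⟩
      have h1 : g (v j) = g0 ⟨v j, hvj⟩ := LinearMap.congr_fun hg ⟨v j, hvj⟩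
      have h2 : li.repr ⟨v j, hvj⟩ = Finsupp.single j 1 :=
        li.repr_eq_single j ⟨v j, hvj⟩ rfl
      have h3 : g0 ⟨v j, hvj⟩ = 1 := by
        simp only [g0, LinearMap.comp_apply, h2, Finsupp.linearCombination_single,
          smul_eq_mul, mul_one]
      show g (Dinf.mkQ (x j)) = 1
      rw [h1, h3]
    have hfU : f ∈ perpC (perpD (⋃ n, (I n : Set (Module.Dual k C)))) := by
      intro c hc
      have hcD : c ∈ Dinf := by
        rw [hDinf, Submodule.mem_iInf]
        intro j h hh
        exact hc h (Set.mem_iUnion.mpr ⟨φ j, hh⟩)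
      have : Dinf.mkQ c = 0 := (Submodule.Quotient.mk_eq_zero _).mpr hcD
      show g (Dinf.mkQ c) = 0
      rw [this, map_zero]
    rw [← hU] at hfU
    obtain ⟨n, hn⟩ := Set.mem_iUnion.mp hfU
    have hfn : f ∈ I (φ n) := Imono (hφle n) hn
    have : f (x n) = 0 := hx1 n f hfn
    rw [hfx n] at this
    exact one_ne_zero this
  · -- stationary → union closed
    rintro ⟨N, hN⟩
    have hUeq : (⋃ n, (I n : Set (Module.Dual k C))) = (I N : Set (Module.Dual k C)) := by
      apply Set.Subset.antisymm
      · apply Set.iUnion_subset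
        intro n
        rcases le_total n N with h | h
        · exact fun z hz => Imono h hz
        · rw [hN n h]
      · exact Set.subset_iUnion (fun n => (I n : Set (Module.Dual k C))) N
    rw [hUeq]
    exact hclosed N

end Paper
end
end

section
/- Let k be a field, C a k-coalgebra and C* its dual convolution algebra. Every closed left ideal of C* (i.e. a left ideal I with I = (I^⊥)^⊥) that is countably generated as a left ideal is finitely generated. -/
open TensorProduct Coalgebra

noncomputable section

namespace Paper

variable {k : Type*} [Field k] {C : Type*} [AddCommGroup C] [Module k C] [Coalgebra k C]

variable {k : Type*} [Field k] {C : Type*} [AddCommGroup C] [Module k C] [Coalgebra k C]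

private lemma mul_apply_wedge (g f : Module.Dual k C) (c : C) :
    (g * f) c = g (wedge f c) := by
  have h : (LinearMap.mul' k k ∘ₗ TensorProduct.map g f : C ⊗[k] C →ₗ[k] k)
      = (g ∘ₗ (TensorProduct.rid k C).toLinearMap ∘ₗ f.lTensor C) := by
    apply TensorProduct.ext'
    intro x y
    simp [mul_comm]
  rw [dual_mul_apply]
  have h2 := LinearMap.congr_fun h (comul (R := k) c)
  simpa [wedge] using h2

private lemma span_fin_closed {n : ℕ} (f : Fin n → Module.Dual k C) :
    ((Submodule.span (Module.Dual k C) (Set.range f) : Ideal (Module.Dual k C))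
        : Set (Module.Dual k C))
      = perpC (perpD ((Submodule.span (Module.Dual k C) (Set.range f)
          : Ideal (Module.Dual k C)) : Set (Module.Dual k C))) := by
  classical
  set J : Ideal (Module.Dual k C) := Submodule.span (Module.Dual k C) (Set.range f) with hJ
  apply Set.Subset.antisymm
  · intro h hh c hc
    exact hc h hh
  · intro h hh
    set Φ : C →ₗ[k] (Fin n → C) := LinearMap.pi (fun i => wedge (f i)) with hΦ
    have hker : ∀ c, Φ c = 0 → h c = 0 := by
      intro c hc
      apply hh
      intro x hx
      have hx' : x ∈ J := hx
      rw [hJ, Submodule.mem_span_range_iff_exists_fun] at hx'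
      obtain ⟨coef, rfl⟩ := hx'
      have hwedge : ∀ i, wedge (f i) c = 0 := by
        intro i
        have := congrFun hc i
        simpa [hΦ] using this
      rw [LinearMap.sum_apply]
      refine Finset.sum_eq_zero fun i _ => ?_
      rw [smul_eq_mul, mul_apply_wedge, hwedge i, map_zero]
    have hle : LinearMap.ker Φ ≤ LinearMap.ker h := by
      intro c hc
      rw [LinearMap.mem_ker] at hc ⊢
      exact hker c hc
    set hbar := (LinearMap.ker Φ).liftQ h hle with hhbar
    set e := Φ.quotKerEquivRange with he
    obtain ⟨G, hG⟩ := LinearMap.exists_extend (hbar ∘ₗ e.symm.toLinearMap)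
    have hGΦ : ∀ c, G (Φ c) = h c := by
      intro c
      have h1 : Φ c = (LinearMap.range Φ).subtype
          (e (Submodule.Quotient.mk c)) := by
        rfl
      rw [h1, ← LinearMap.comp_apply, hG]
      simp [hhbar]
    have hrep : h = ∑ i, (G ∘ₗ LinearMap.single k (fun _ : Fin n => C) i) * f i := by
      ext c
      rw [LinearMap.sum_apply, ← hGΦ c]
      have hsplit : Φ c = ∑ i, Pi.single i (Φ c i) := by
        rw [Finset.univ_sum_single]
      rw [hsplit, map_sum]
      refine Finset.sum_congr rfl fun i _ => ?_
      rw [mul_apply_wedge]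
      simp [hΦ, LinearMap.single]
      rfl
    rw [hrep]
    refine Submodule.sum_mem _ fun i _ => ?_
    rw [← smul_eq_mul]
    exact Submodule.smul_mem _ _ (Submodule.subset_span (Set.mem_range_self i))

private def perpSub (Y : Set (Module.Dual k C)) : Submodule k C :=
  ⨅ f ∈ Y, LinearMap.ker f

private lemma mem_perpSub {Y : Set (Module.Dual k C)} {c : C} :
    c ∈ perpSub Y ↔ c ∈ perpD Y := by
  simp [perpSub, perpD, Submodule.mem_iInf, LinearMap.mem_ker]


/-- Every closed left ideal of `C*` that is countably generated
is finitely generated. -/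
theorem statement2 {k : Type*} [Field k] {C : Type*} [AddCommGroup C] [Module k C]
    [Coalgebra k C] (I : Ideal (Module.Dual k C))
    (hclosed : (I : Set (Module.Dual k C)) = perpC (perpD (I : Set (Module.Dual k C))))
    (hcount : ∃ G : Set (Module.Dual k C), G.Countable ∧ Submodule.span (Module.Dual k C) G = I) :
    I.FG := by
  classical
  obtain ⟨G, hGc, hGspan⟩ := hcount
  rcases G.eq_empty_or_nonempty with hGe | hGne
  · subst hGe
    rw [Submodule.span_empty] at hGspan
    exact hGspan ▸ Submodule.fg_bot
  obtain ⟨g, hg⟩ := Set.Countable.exists_eq_range hGc hGne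
  subst hg
  set J : ℕ → Ideal (Module.Dual k C) := fun n =>
    Submodule.span (Module.Dual k C) (Set.range fun i : Fin (n + 1) => g i) with hJdef
  have hJI : ∀ n, J n ≤ I := by
    intro n
    rw [← hGspan]
    exact Submodule.span_mono (Set.range_comp_subset_range _ g)
  have hJmono : ∀ {a b : ℕ}, a ≤ b → J a ≤ J b := by
    intro a b hab
    refine Submodule.span_mono ?_
    intro x hx
    obtain ⟨i, hi⟩ := hx
    exact ⟨⟨i.1, by omega⟩, by simpa using hi⟩
  have hunion : ∀ h ∈ I, ∃ n, h ∈ J n := by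
    intro h hh
    rw [← hGspan, Submodule.mem_span_set'] at hh
    obtain ⟨m, coef, vv, hsum⟩ := hh
    choose idx hidx using fun i => (vv i).2
    refine ⟨Finset.univ.sup idx, ?_⟩
    rw [← hsum]
    refine Submodule.sum_mem _ fun i _ => Submodule.smul_mem _ _ (Submodule.subset_span ?_)
    exact ⟨⟨idx i, Nat.lt_succ_of_le (Finset.le_sup (Finset.mem_univ i))⟩, by simpa using hidx i⟩
  have hanti : ∀ {a b : ℕ}, a ≤ b →
      perpSub ((J b : Set (Module.Dual k C))) ≤ perpSub ((J a : Set (Module.Dual k C))) := by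
    intro a b hab c hc
    rw [mem_perpSub] at hc ⊢
    intro f hf
    exact hc f (hJmono hab hf)
  have hWile : ∀ m, perpSub ((I : Set (Module.Dual k C)))
      ≤ perpSub ((J m : Set (Module.Dual k C))) := by
    intro m c hc
    rw [mem_perpSub] at hc ⊢
    intro f hf
    exact hc f (hJI m hf)
  by_cases hex : ∃ n, perpSub ((J n : Set (Module.Dual k C)))
      ≤ perpSub ((I : Set (Module.Dual k C)))
  · obtain ⟨n, hn⟩ := hex
    have hperp : perpD ((J n : Set (Module.Dual k C))) = perpD ((I : Set (Module.Dual k C))) := by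
      ext c
      constructor
      · intro hc
        exact mem_perpSub.mp (hn (mem_perpSub.mpr hc))
      · intro hc
        exact mem_perpSub.mp (hWile n (mem_perpSub.mpr hc))
    have hset : ((J n : Set (Module.Dual k C))) = (I : Set (Module.Dual k C)) := by
      have hcl := span_fin_closed (fun i : Fin (n + 1) => g i)
      rw [hJdef]
      rw [hcl]
      rw [show ((Submodule.span (Module.Dual k C)
          (Set.range fun i : Fin (n + 1) => g i) : Ideal (Module.Dual k C))
            : Set (Module.Dual k C)) = ((J n : Set (Module.Dual k C))) from rfl, hperp, ← hclosed]
    have hJnI : J n = I := SetLike.coe_injective hset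
    rw [← hJnI]
    exact Submodule.fg_span (Set.finite_range _)
  · exfalso
    push_neg at hex
    have hex' : ∀ n, ∃ c, c ∈ perpSub ((J n : Set (Module.Dual k C)))
        ∧ c ∉ perpSub ((I : Set (Module.Dual k C))) := by
      intro n
      obtain ⟨c, hc1, hc2⟩ := SetLike.not_le_iff_exists.mp (hex n)
      exact ⟨c, hc1, hc2⟩
    choose cc hcc1 hcc2 using hex'
    have hm : ∀ n, ∃ m, cc n ∉ perpSub ((J m : Set (Module.Dual k C))) := by
      intro n
      by_contra hcon
      push_neg at hcon
      refine hcc2 n ?_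
      rw [mem_perpSub]
      intro f hf
      obtain ⟨m, hfm⟩ := hunion f hf
      exact mem_perpSub.mp (hcon m) f hfm
    choose mf hmf using hm
    set Nf : ℕ → ℕ := fun j => Nat.rec 0 (fun _ N => max (mf N) (N + 1)) j with hNf
    have hN_succ : ∀ j, Nf (j + 1) = max (mf (Nf j)) (Nf j + 1) := fun j => rfl
    have hNmono : StrictMono Nf := strictMono_nat_of_lt_succ fun j => by
      rw [hN_succ]; omega
    set v : ℕ → C := fun j => cc (Nf j) with hv
    have hv1 : ∀ j, v j ∈ perpSub ((J (Nf j) : Set (Module.Dual k C))) := fun j => hcc1 _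
    have hv2 : ∀ j, v j ∉ perpSub ((J (Nf (j + 1)) : Set (Module.Dual k C))) := by
      intro j hmem
      refine hmf (Nf j) (hanti ?_ hmem)
      rw [hN_succ]
      exact le_max_left _ _
    set Wi : Submodule k C := perpSub ((I : Set (Module.Dual k C))) with hWi
    have hli : LinearIndependent k (fun j => (Submodule.Quotient.mk (v j) : C ⧸ Wi)) := by
      rw [linearIndependent_iff']
      intro s coef hsum
      by_contra hcon
      push_neg at hcon
      obtain ⟨i0, hi0s, hi0⟩ := hcon
      set T : Finset ℕ := s.filter (fun i => coef i ≠ 0) with hT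
      have hTne : T.Nonempty := ⟨i0, by simp [hT, hi0s, hi0]⟩
      set j0 := T.min' hTne with hj0
      have hj0T : j0 ∈ T := T.min'_mem hTne
      have hcoefj0 : coef j0 ≠ 0 := (Finset.mem_filter.mp hj0T).2
      have hwmem : (∑ i ∈ s, coef i • v i) ∈ Wi := by
        have : Wi.mkQ (∑ i ∈ s, coef i • v i) = 0 := by
          rw [map_sum]
          simp only [map_smul, Submodule.mkQ_apply]
          exact hsum
        rwa [Submodule.mkQ_apply, Submodule.Quotient.mk_eq_zero] at this
      have hsumT : (∑ i ∈ s, coef i • v i) = ∑ i ∈ T, coef i • v i := by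
        rw [hT]
        refine (Finset.sum_filter_of_ne ?_).symm
        intro i _ hne hz
        exact hne (by rw [hz, zero_smul])
      set P : Submodule k C := perpSub ((J (Nf (j0 + 1)) : Set (Module.Dual k C))) with hP
      have hWiP : Wi ≤ P := hWile _
      have hrest : (∑ i ∈ T.erase j0, coef i • v i) ∈ P := by
        refine Submodule.sum_mem _ fun i hi => Submodule.smul_mem _ _ ?_
        have hiT := Finset.mem_of_mem_erase hi
        have hine : i ≠ j0 := Finset.ne_of_mem_erase hi
        have hij0 : j0 < i := lt_of_le_of_ne (T.min'_le i hiT) (Ne.symm hine)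
        exact hanti (hNmono.le_iff_le.mpr hij0) (hv1 i)
      have hj0mem : coef j0 • v j0 ∈ P := by
        have hTsum : coef j0 • v j0 = (∑ i ∈ T, coef i • v i)
            - ∑ i ∈ T.erase j0, coef i • v i := by
          rw [← Finset.add_sum_erase T _ hj0T]
          abel
        rw [hTsum]
        exact Submodule.sub_mem _ (hP ▸ (hWiP (hsumT ▸ hwmem))) hrest
      exact hv2 j0 ((P.smul_mem_iff hcoefj0).mp hj0mem)
    have hsetli : LinearIndepOn k id
        (Set.range (fun j => (Submodule.Quotient.mk (v j) : C ⧸ Wi))) :=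
      (linearIndepOn_id_range_iff hli.injective).mpr hli
    set B := Module.Basis.extend hsetli with hB
    set φ : (C ⧸ Wi) →ₗ[k] k := B.constr k (fun _ => (1 : k)) with hφdef
    have hφ : ∀ j, φ (Submodule.Quotient.mk (v j)) = 1 := by
      intro j
      have hmem : (Submodule.Quotient.mk (v j) : C ⧸ Wi)
          ∈ hsetli.extend (Set.subset_univ _) :=
        hsetli.subset_extend _ ⟨j, rfl⟩
      have hBx : (Submodule.Quotient.mk (v j) : C ⧸ Wi) = B ⟨_, hmem⟩ :=
        (Module.Basis.extend_apply_self hsetli ⟨_, hmem⟩).symm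
      rw [hBx, hφdef, Module.Basis.constr_basis]
    set f : Module.Dual k C := φ ∘ₗ Wi.mkQ with hf
    have hfI : f ∈ I := by
      have hfperp : f ∈ perpC (perpD ((I : Set (Module.Dual k C)))) := by
        intro c hc
        show φ (Wi.mkQ c) = 0
        have hc0 : Wi.mkQ c = 0 := by
          rw [Submodule.mkQ_apply, Submodule.Quotient.mk_eq_zero]
          exact mem_perpSub.mpr hc
        rw [hc0, map_zero]
      rw [← hclosed] at hfperp
      exact hfperp
    obtain ⟨m, hfm⟩ := hunion f hfI
    have hvm : v m ∈ perpSub ((J m : Set (Module.Dual k C))) :=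
      hanti (hNmono.le_apply) (hv1 m)
    have hfvm : f (v m) = 0 := mem_perpSub.mp hvm f hfm
    have : φ (Submodule.Quotient.mk (v m)) = 0 := hfvm
    rw [hφ m] at this
    exact one_ne_zero this


end Paper
end
end

section
/- Let k be a field, C a k-coalgebra and C* its dual convolution algebra. Suppose C is left quasi-co-Frobenius (left QcF): there exists a set I and an injective morphism of left C*-modules from C (with its canonical left C*-module structure f ⇀ c = Σ c₁ f(c₂)) into the direct product (C*)^I. Then C* is left Rat-Kasch: every simple rational left C*-module embeds into C* as a left C*-module. -/
open TensorProduct Coalgebra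

noncomputable section

namespace Paper

variable {k : Type*} [Field k] {C : Type*} [AddCommGroup C] [Module k C] [Coalgebra k C]

variable {k : Type*} [Field k] {C : Type*} [AddCommGroup C] [Module k C] [Coalgebra k C]

universe v

/-- If `C` is left quasi-co-Frobenius, i.e. there is a set `ι` and an
injective morphism of left `C*`-modules from `C` (with the action `f ⇀ c = Σ c₁ f(c₂)`)
into `(C*)^ι`, then every simple rational left `C*`-module embeds into `C*`. -/
theorem statement7 {k : Type*} [Field k] {C : Type*} [AddCommGroup C] [Module k C]
    [Coalgebra k C] (ι : Type*) (φ : C →+ (ι → Module.Dual k C))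
    (hφ : ∀ (f : Module.Dual k C) (c : C) (i : ι), φ (wedge f c) i = f * φ c i)
    (hinj : Function.Injective φ) :
    ∀ (T : Type v) [AddCommGroup T] [Module (Module.Dual k C) T],
      IsSimpleModule (Module.Dual k C) T → IsRationalLeft k C T →
      ∃ g : T →ₗ[Module.Dual k C] Module.Dual k C, Function.Injective g := by
  intro T _ _ hsimp hrat
  classical
  -- `k`-module structure on `T` via the ring hom `a ↦ a • 1` into the dual algebra
  let κ : k →+* Module.Dual k C :=
    { toFun := fun a => a • (1 : Module.Dual k C)
      map_one' := one_smul k 1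
      map_mul' := fun a b => by
        show (a * b) • (1 : Module.Dual k C) = (a • 1) * (b • 1)
        rw [smul_mul_assoc, one_mul, smul_smul]
      map_zero' := zero_smul k 1
      map_add' := fun a b => add_smul a b 1 }
  letI : Module k T := Module.compHom T κ
  have hks : ∀ (a : k) (m : T), a • m = (a • (1 : Module.Dual k C)) • m := fun _ _ => rfl
  -- evaluation against `wedge`
  have hgw : ∀ (g f : Module.Dual k C) (c : C), g (wedge f c) = (g * f) c := by
    intro g f c
    have h : ((g ∘ₗ (TensorProduct.rid k C).toLinearMap) ∘ₗ f.lTensor C : C ⊗[k] C →ₗ[k] k)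
        = LinearMap.mul' k k ∘ₗ TensorProduct.map g f := by
      ext x y
      simp [mul_comm]
    have h2 := LinearMap.congr_fun h (comul (R := k) c)
    simpa [wedge, dual_mul_apply] using h2
  have : Nontrivial T := IsSimpleModule.nontrivial (Module.Dual k C) T
  obtain ⟨t, ht⟩ := exists_ne (0 : T)
  obtain ⟨n, ms, cs, hr⟩ := hrat t
  let x : Module.Dual k T → C := fun l => ∑ i, l (ms i) • cs i
  have hxeval : ∀ (h : Module.Dual k C) (l : Module.Dual k T),
      h (x l) = ∑ i, l (ms i) * h (cs i) := by
    intro h l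
    simp only [x, map_sum, map_smul, smul_eq_mul]
  have hA : ∀ f : Module.Dual k C, f • t = 0 → ∀ l : Module.Dual k T, wedge f (x l) = 0 := by
    intro f hf l
    rw [← Module.forall_dual_apply_eq_zero_iff k]
    intro g
    rw [hgw]
    have h1 : (g * f) (x l) = l ((g * f) • t) := by
      rw [hr (g * f), hxeval, map_sum]
      refine Finset.sum_congr rfl fun i _ => ?_
      rw [← hks, map_smul, smul_eq_mul, mul_comm]
    rw [h1, mul_smul, hf, smul_zero, map_zero]
  have hB : ∃ (l : Module.Dual k T) (i : ι), φ (x l) i ≠ 0 := by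
    by_contra hB
    push_neg at hB
    have hx0 : ∀ l, x l = 0 := by
      intro l
      apply hinj
      rw [map_zero]
      funext i
      simpa using hB l i
    have ht0 : t = 0 := by
      have h1 : t = ∑ i, ((1 : Module.Dual k C) (cs i) • (1 : Module.Dual k C)) • ms i := by
        rw [← hr 1, one_smul]
      rw [h1, ← Module.forall_dual_apply_eq_zero_iff k]
      intro l
      have h2 : (1 : Module.Dual k C) (x l) = 0 := by rw [hx0 l, map_zero]
      rw [map_sum]
      calc ∑ i, l (((1 : Module.Dual k C) (cs i) • (1 : Module.Dual k C)) • ms i)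
          = ∑ i, l (ms i) * (1 : Module.Dual k C) (cs i) := by
            refine Finset.sum_congr rfl fun i _ => ?_
            rw [← hks, map_smul, smul_eq_mul, mul_comm]
        _ = (1 : Module.Dual k C) (x l) := (hxeval 1 l).symm
        _ = 0 := h2
    exact ht ht0
  obtain ⟨l0, i0, hu0⟩ := hB
  set u := φ (x l0) i0 with hudef
  have hu : ∀ f : Module.Dual k C, f • t = 0 → f * u = 0 := by
    intro f hf
    have h1 := hφ f (x l0) i0
    rw [hA f hf l0, map_zero] at h1
    simpa using h1.symm
  let p : Module.Dual k C →ₗ[Module.Dual k C] T :=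
    { toFun := fun f => f • t
      map_add' := fun f g => add_smul f g t
      map_smul' := fun r f => mul_smul r f t }
  let rmap : Module.Dual k C →ₗ[Module.Dual k C] Module.Dual k C :=
    { toFun := fun f => f * u
      map_add' := fun f g => add_mul f g u
      map_smul' := fun r f => by simp [smul_eq_mul, mul_assoc] }
  have hp : ∀ f : Module.Dual k C, p f = f • t := fun _ => rfl
  have hsurj : Function.Surjective p := by
    rw [← LinearMap.range_eq_top]
    rcases eq_bot_or_eq_top (LinearMap.range p) with h | h
    · exfalso
      have h1 : t ∈ LinearMap.range p := ⟨1, one_smul _ t⟩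
      rw [h] at h1
      exact ht (by simpa using h1)
    · exact h
  have hker : LinearMap.ker p ≤ LinearMap.ker rmap := by
    intro f hf
    have h1 : f • t = 0 := hf
    exact hu f h1
  let e := LinearMap.quotKerEquivOfSurjective p hsurj
  let g := Submodule.liftQ (LinearMap.ker p) rmap hker ∘ₗ e.symm.toLinearMap
  have hgp : ∀ f : Module.Dual k C, g (p f) = f * u := by
    intro f
    have he : e (Submodule.Quotient.mk f) = p f := rfl
    show (Submodule.liftQ (LinearMap.ker p) rmap hker) (e.symm (p f)) = f * u
    rw [← he, LinearEquiv.symm_apply_apply, Submodule.liftQ_apply]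
    rfl
  refine ⟨g, ?_⟩
  rw [← LinearMap.ker_eq_bot]
  rcases eq_bot_or_eq_top (LinearMap.ker g) with h | h
  · exact h
  · exfalso
    have h1 : g t = 0 := by
      have h2 : t ∈ LinearMap.ker g := h ▸ Submodule.mem_top
      exact h2
    have h2 : g t = u := by
      have h3 := hgp 1
      rw [one_mul, hp, one_smul] at h3
      exact h3
    exact hu0 (h2.symm.trans h1)


end Paper
end
end

section
/- Let k be a field, C a k-coalgebra and C* its dual convolution algebra. If there are infinitely many isomorphism classes of simple rational left C*-modules, then there exists a simple left C*-module which is not rational. -/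
open TensorProduct Coalgebra

noncomputable section

namespace Paper

variable {k : Type*} [Field k] {C : Type*} [AddCommGroup C] [Module k C] [Coalgebra k C]

variable {k : Type*} [Field k] {C : Type*} [AddCommGroup C] [Module k C] [Coalgebra k C]

section Aux14

variable {k : Type*} [Field k] {C : Type*} [AddCommGroup C] [Module k C] [Coalgebra k C]

private lemma exists_functional {M : Type*} [AddCommGroup M] [Module k M]
    (V : Submodule k M) {x : M} (hx : x ∉ V) :
    ∃ l : M →ₗ[k] k, (∀ v ∈ V, l v = 0) ∧ l x = 1 := by
  have hy : (Submodule.Quotient.mk x : M ⧸ V) ≠ 0 := by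
    simpa [Submodule.Quotient.mk_eq_zero] using hx
  obtain ⟨φ, hφ⟩ : ∃ φ : Module.Dual k (M ⧸ V), φ (Submodule.Quotient.mk x) ≠ 0 := by
    by_contra h
    push_neg at h
    exact hy ((Module.forall_dual_apply_eq_zero_iff k _).mp h)
  refine ⟨(φ (Submodule.Quotient.mk x))⁻¹ • (φ ∘ₗ V.mkQ), fun v hv => ?_, ?_⟩
  · have hv0 : V.mkQ v = 0 := (Submodule.Quotient.mk_eq_zero V).mpr hv
    simp [hv0]
  · simp [smul_eq_mul, inv_mul_cancel₀ hφ]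

private def perpS (S : Set (Module.Dual k C)) : Submodule k C where
  carrier := {c | ∀ f ∈ S, f c = 0}
  add_mem' := by
    intro a b ha hb f hf
    simp [ha f hf, hb f hf]
  zero_mem' := fun f _ => map_zero f
  smul_mem' := by
    intro a c hc f hf
    simp [hc f hf]

private lemma eval_sum {nn : ℕ} (cs : Fin nn → C) (l : (Fin nn → k) →ₗ[k] k)
    (g : Module.Dual k C) :
    g (∑ i, l (Pi.single i 1) • cs i) = l (fun i => g (cs i)) := by
  have h1 : (fun i => g (cs i)) = ∑ i, Pi.single i (g (cs i)) :=
    (Finset.univ_sum_single _).symm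
  rw [h1, map_sum, map_sum]
  refine Finset.sum_congr rfl fun i _ => ?_
  have h2 : Pi.single i (g (cs i)) = g (cs i) • (Pi.single i (1 : k) : Fin nn → k) := by
    rw [← Pi.single_smul, smul_eq_mul, mul_one]
  rw [map_smul, h2, map_smul, smul_eq_mul, smul_eq_mul, mul_comm]

private lemma approx (S : Submodule k (Module.Dual k C)) {nn : ℕ} (cs : Fin nn → C)
    (f : Module.Dual k C) (hf : ∀ c : C, (∀ g ∈ S, g c = 0) → f c = 0) :
    ∃ g ∈ S, ∀ i, f (cs i) = g (cs i) := by
  classical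
  let ρ : Module.Dual k C →ₗ[k] (Fin nn → k) :=
    { toFun := fun g i => g (cs i)
      map_add' := fun a b => by funext i; simp
      map_smul' := fun a g => by funext i; simp }
  by_cases hv : ρ f ∈ S.map ρ
  · obtain ⟨g, hg, hgf⟩ := hv
    refine ⟨g, hg, fun i => ?_⟩
    exact (congrFun hgf i).symm
  · exfalso
    obtain ⟨l, hl0, hl1⟩ := exists_functional (S.map ρ) hv
    have key : ∀ g : Module.Dual k C, g (∑ i, l (Pi.single i 1) • cs i) = l (ρ g) :=
      fun g => eval_sum cs l g
    have hc0 : f (∑ i, l (Pi.single i 1) • cs i) = 0 := by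
      refine hf _ fun g hg => ?_
      rw [key]
      exact hl0 _ ⟨g, hg, rfl⟩
    rw [key, hl1] at hc0
    exact one_ne_zero hc0

private lemma build_equiv {A Ip Im : Ideal (Module.Dual k C)}
    (hm : A ⊔ Im = ⊤) (hp : A ⊔ Ip = ⊤) (hIp : IsCoatom Ip) (hIm : IsCoatom Im)
    (h : A ⊓ Ip ≤ Im) :
    Nonempty ((Module.Dual k C ⧸ Ip) ≃ₗ[Module.Dual k C] (Module.Dual k C ⧸ Im)) := by
  haveI hs1 : IsSimpleModule (Module.Dual k C) (Module.Dual k C ⧸ Ip) :=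
    isSimpleModule_iff_isCoatom.mpr hIp
  haveI hs2 : IsSimpleModule (Module.Dual k C) (Module.Dual k C ⧸ Im) :=
    isSimpleModule_iff_isCoatom.mpr hIm
  have hsur : ∀ (Q : Ideal (Module.Dual k C)), A ⊔ Q = ⊤ →
      Function.Surjective (Q.mkQ ∘ₗ A.subtype) := by
    intro Q hQ y
    obtain ⟨x, rfl⟩ := Q.mkQ_surjective y
    have hx : x ∈ A ⊔ Q := by rw [hQ]; exact Submodule.mem_top
    obtain ⟨a, ha, b, hb, hab⟩ := Submodule.mem_sup.mp hx
    refine ⟨⟨a, ha⟩, ?_⟩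
    have hmk : (Submodule.Quotient.mk a : Module.Dual k C ⧸ Q) = Submodule.Quotient.mk x := by
      rw [Submodule.Quotient.eq]
      have hd : a - x = -b := by rw [← hab]; abel
      rw [hd]
      exact Q.neg_mem hb
    simpa using hmk
  set φ : A →ₗ[Module.Dual k C] (Module.Dual k C ⧸ Im) := Im.mkQ ∘ₗ A.subtype with hφdef
  set ψ : A →ₗ[Module.Dual k C] (Module.Dual k C ⧸ Ip) := Ip.mkQ ∘ₗ A.subtype with hψdef
  have hφs : Function.Surjective φ := hsur Im hm
  have hψs : Function.Surjective ψ := hsur Ip hp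
  have hker : LinearMap.ker ψ ≤ LinearMap.ker φ := by
    intro x hx
    have hxp : (x : Module.Dual k C) ∈ Ip := by
      rwa [LinearMap.mem_ker, hψdef, LinearMap.comp_apply, Submodule.subtype_apply,
        Submodule.mkQ_apply, Submodule.Quotient.mk_eq_zero] at hx
    have hxm : (x : Module.Dual k C) ∈ Im := h ⟨x.2, hxp⟩
    rw [LinearMap.mem_ker, hφdef, LinearMap.comp_apply, Submodule.subtype_apply,
      Submodule.mkQ_apply, Submodule.Quotient.mk_eq_zero]
    exact hxm
  let e := LinearMap.quotKerEquivOfSurjective ψ hψs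
  have he : ∀ x : A, e (Submodule.Quotient.mk x) = ψ x := fun x => rfl
  let f0 : (Module.Dual k C ⧸ Ip) →ₗ[Module.Dual k C] (Module.Dual k C ⧸ Im) :=
    ((LinearMap.ker ψ).liftQ φ hker) ∘ₗ e.symm.toLinearMap
  have hf0 : ∀ x : A, f0 (ψ x) = φ x := by
    intro x
    have h1 : e.symm (ψ x) = Submodule.Quotient.mk x := by
      rw [LinearEquiv.symm_apply_eq, he]
    show ((LinearMap.ker ψ).liftQ φ hker) (e.symm (ψ x)) = φ x
    rw [h1]
    exact Submodule.liftQ_apply _ _ _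
  have hfs : Function.Surjective f0 := by
    intro y
    obtain ⟨x, hx⟩ := hφs y
    exact ⟨ψ x, by rw [hf0, hx]⟩
  have hfi : Function.Injective f0 := by
    rcases eq_bot_or_eq_top (LinearMap.ker f0) with hbot | htop
    · exact LinearMap.ker_eq_bot.mp hbot
    · exfalso
      have hzero : f0 = 0 := LinearMap.ker_eq_top.mp htop
      have h1 : (Submodule.Quotient.mk (1 : Module.Dual k C) : Module.Dual k C ⧸ Im) ≠ 0 := by
        intro hc
        exact hIm.1 ((Ideal.eq_top_iff_one Im).mpr ((Submodule.Quotient.mk_eq_zero Im).mp hc))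
      obtain ⟨x, hx⟩ := hfs (Submodule.Quotient.mk 1)
      rw [hzero] at hx
      exact h1 (by simpa using hx.symm)
  exact ⟨LinearEquiv.ofBijective f0 ⟨hfi, hfs⟩⟩

private lemma comax (I : ℕ → Ideal (Module.Dual k C))
    (hmax : ∀ n, IsCoatom (I n))
    (hpairwise : ∀ m n, m ≠ n →
      IsEmpty ((Module.Dual k C ⧸ I m) ≃ₗ[Module.Dual k C] (Module.Dual k C ⧸ I n)))
    (G : Finset ℕ) : ∀ m ∉ G, (⨅ n ∈ G, I n) ⊔ I m = ⊤ := by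
  classical
  induction G using Finset.induction_on with
  | empty => intro m _; simp
  | @insert p G hpG IH =>
    intro m hm
    rw [Finset.mem_insert, not_or] at hm
    obtain ⟨hmp, hmG⟩ := hm
    rw [Finset.iInf_insert]
    by_contra hne
    have hle : I p ⊓ (⨅ n ∈ G, I n) ≤ I m := by
      have h1 : I m ≤ (I p ⊓ ⨅ n ∈ G, I n) ⊔ I m := le_sup_right
      rcases h1.lt_or_eq with hlt | heq
      · exact absurd ((hmax m).2 _ hlt) hne
      · calc I p ⊓ (⨅ n ∈ G, I n) ≤ (I p ⊓ ⨅ n ∈ G, I n) ⊔ I m := le_sup_left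
          _ = I m := heq.symm
    have hsub : (⨅ n ∈ G, I n) ⊓ I p ≤ I m := by rwa [inf_comm] at hle
    obtain ⟨e⟩ := build_equiv (IH m hmG) (IH p hpG) (hmax p) (hmax m) hsub
    exact (hpairwise p m (Ne.symm hmp)).false e

private lemma disj_single (I : ℕ → Ideal (Module.Dual k C))
    (hmax : ∀ n, IsCoatom (I n))
    (hpairwise : ∀ m n, m ≠ n →
      IsEmpty ((Module.Dual k C ⧸ I m) ≃ₗ[Module.Dual k C] (Module.Dual k C ⧸ I n)))
    (G : Finset ℕ) (p : ℕ) (hp : p ∉ G) (c : C)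
    (h1 : c ∈ perpS (I p : Set (Module.Dual k C)))
    (h2 : c ∈ G.sup fun n => perpS (I n : Set (Module.Dual k C))) : c = 0 := by
  refine (Module.forall_dual_apply_eq_zero_iff k c).mp fun f => ?_
  have htop := comax I hmax hpairwise G p hp
  have hf : f ∈ (⨅ n ∈ G, I n) ⊔ I p := by rw [htop]; exact Submodule.mem_top
  obtain ⟨g, hg, b, hb, hab⟩ := Submodule.mem_sup.mp hf
  have hgc : g c = 0 := by
    have hle : (G.sup fun n => perpS (I n : Set (Module.Dual k C)))
        ≤ perpS ((⨅ n ∈ G, I n : Ideal (Module.Dual k C)) : Set (Module.Dual k C)) := by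
      refine Finset.sup_le fun m hmG => ?_
      intro x hx f' hf'
      refine hx f' ?_
      exact (Submodule.mem_iInf _).mp ((Submodule.mem_iInf _).mp hf' m) hmG
    exact hle h2 g hg
  have hbc : b c = 0 := h1 b hb
  rw [← hab]
  simp [hgc, hbc]

private lemma disj_pair (I : ℕ → Ideal (Module.Dual k C))
    (hmax : ∀ n, IsCoatom (I n))
    (hpairwise : ∀ m n, m ≠ n →
      IsEmpty ((Module.Dual k C ⧸ I m) ≃ₗ[Module.Dual k C] (Module.Dual k C ⧸ I n)))
    (G : Finset ℕ) : ∀ G' : Finset ℕ, (∀ m ∈ G, m ∉ G') → ∀ c : C,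
      c ∈ G.sup (fun n => perpS (I n : Set (Module.Dual k C))) →
      c ∈ G'.sup (fun n => perpS (I n : Set (Module.Dual k C))) → c = 0 := by
  classical
  induction G using Finset.induction_on with
  | empty => intro G' _ c hc _; simpa using hc
  | @insert p G hpG IH =>
    intro G' hd c h1 h2
    rw [Finset.sup_insert] at h1
    obtain ⟨z, hz, a, ha, hza⟩ := Submodule.mem_sup.mp h1
    have hz0 : z = 0 := by
      refine disj_single I hmax hpairwise (G ∪ G') p ?_ z hz ?_
      · intro hmem
        rcases Finset.mem_union.mp hmem with hmem | hmem
        · exact hpG hmem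
        · exact hd p (Finset.mem_insert_self p G) hmem
      · have hc' : c ∈ (G ∪ G').sup (fun n => perpS (I n : Set (Module.Dual k C))) :=
          SetLike.le_def.mp (Finset.sup_mono Finset.subset_union_right) h2
        have ha' : a ∈ (G ∪ G').sup (fun n => perpS (I n : Set (Module.Dual k C))) :=
          SetLike.le_def.mp (Finset.sup_mono Finset.subset_union_left) ha
        have hzc : z = c - a := by rw [← hza]; abel
        rw [hzc]
        exact Submodule.sub_mem _ hc' ha'
    have hca : c = a := by rw [← hza, hz0, zero_add]
    exact IH G' (fun m hm => hd m (Finset.mem_insert_of_mem hm)) c (by rw [hca]; exact ha) h2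

end Aux14

/-- If there are infinitely many isomorphism classes of simple rational
left `C*`-modules (here realized as quotients of `C*` by maximal left ideals), then there
is a simple left `C*`-module which is not rational. -/
theorem statement14 {k : Type*} [Field k] {C : Type*} [AddCommGroup C] [Module k C]
    [Coalgebra k C] (I : ℕ → Ideal (Module.Dual k C))
    (hmax : ∀ n, IsCoatom (I n))
    (hrat : ∀ n, IsRationalLeft k C (Module.Dual k C ⧸ I n))
    (hpairwise : ∀ m n, m ≠ n →
      IsEmpty ((Module.Dual k C ⧸ I m) ≃ₗ[Module.Dual k C] (Module.Dual k C ⧸ I n))) :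
    ∃ J : Ideal (Module.Dual k C), IsCoatom J ∧
      ¬ IsRationalLeft k C (Module.Dual k C ⧸ J) := by
  classical
  -- the increasing family of left ideals `LN N = ⋂_{m ≥ N} I m`
  set LN : ℕ → Ideal (Module.Dual k C) := fun N => ⨅ m, ⨅ _ : N ≤ m, I m with hLNdef
  have hLN_le : ∀ N m, N ≤ m → LN N ≤ I m := fun N m h =>
    (iInf_le _ m).trans (iInf_le _ h)
  have hLN_mem : ∀ N (f : Module.Dual k C), (∀ m, N ≤ m → f ∈ I m) → f ∈ LN N := by
    intro N f hf
    refine (Submodule.mem_iInf _).mpr fun m => (Submodule.mem_iInf _).mpr fun hm => hf m hm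
  have hLN_mono : Monotone LN := fun N N' h =>
    le_iInf fun m => le_iInf fun hm => hLN_le N m (h.trans hm)
  -- the union `L` of the `LN N` is a proper left ideal
  have hL : (⨆ N, LN N) ≠ ⊤ := by
    intro htop
    have h1 : (1 : Module.Dual k C) ∈ ⨆ N, LN N := by rw [htop]; exact Submodule.mem_top
    obtain ⟨N, hN⟩ := (Submodule.mem_iSup_of_directed _ hLN_mono.directed_le).mp h1
    exact (hmax N).1 ((Ideal.eq_top_iff_one (I N)).mpr (hLN_le N N le_rfl hN))
  obtain ⟨J, hJmax, hLJ⟩ := Ideal.exists_le_maximal _ hL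
  have hJco : IsCoatom J := Ideal.isMaximal_def.mp hJmax
  refine ⟨J, hJco, ?_⟩
  intro hJrat
  obtain ⟨nn, ms, cs, hms⟩ := hJrat (Submodule.Quotient.mk 1)
  -- any functional vanishing on all the `cs i` lies in `J`
  have keyJ : ∀ f : Module.Dual k C, (∀ i, f (cs i) = 0) → f ∈ J := by
    intro f hf
    have h0 : f • (Submodule.Quotient.mk (1 : Module.Dual k C) :
        Module.Dual k C ⧸ J) = 0 := by
      rw [hms f]
      simp [hf]
    rw [← Submodule.Quotient.mk_smul, smul_eq_mul, mul_one] at h0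
    exact (Submodule.Quotient.mk_eq_zero J).mp h0
  -- closedness of the `I n`: any functional vanishing on `(I n)^⊥` lies in `I n`
  have hclosed : ∀ n (f : Module.Dual k C),
      (∀ c ∈ perpS (I n : Set (Module.Dual k C)), f c = 0) → f ∈ I n := by
    intro n f hf
    obtain ⟨m0, ms0, cs0, hms0⟩ := hrat n (Submodule.Quotient.mk 1)
    have key0 : ∀ g : Module.Dual k C, (∀ i, g (cs0 i) = 0) → g ∈ I n := by
      intro g hg
      have h0 : g • (Submodule.Quotient.mk (1 : Module.Dual k C) :
          Module.Dual k C ⧸ I n) = 0 := by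
        rw [hms0 g]
        simp [hg]
      rw [← Submodule.Quotient.mk_smul, smul_eq_mul, mul_one] at h0
      exact (Submodule.Quotient.mk_eq_zero (I n)).mp h0
    obtain ⟨g, hg, hfg⟩ := approx ((I n).restrictScalars k) cs0 f (fun c hc => hf c hc)
    have hsub : f - g ∈ I n := by
      refine key0 _ fun i => ?_
      rw [LinearMap.sub_apply, hfg i, sub_self]
    simpa using (I n).add_mem hsub hg
  -- description of the orthogonal of `LN N` inside `C`
  have hfour : ∀ N (c : C), (∀ f ∈ LN N, f c = 0) →
      ∃ G : Finset ℕ, (∀ m ∈ G, N ≤ m) ∧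
        c ∈ G.sup fun n => perpS (I n : Set (Module.Dual k C)) := by
    intro N c hc
    have hcB : c ∈ ⨆ m : {m : ℕ // N ≤ m}, perpS (I m.1 : Set (Module.Dual k C)) := by
      by_contra hcb
      obtain ⟨F, hF0, hF1⟩ := exists_functional _ hcb
      have hFL : F ∈ LN N := by
        refine hLN_mem N F fun m hm => hclosed m F fun c' hc' => ?_
        exact hF0 c'
          (le_iSup (fun m : {m : ℕ // N ≤ m} =>
            perpS (I m.1 : Set (Module.Dual k C))) ⟨m, hm⟩ hc')
      have := hc F hFL
      rw [hF1] at this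
      exact one_ne_zero this
    obtain ⟨s, hs⟩ := Submodule.mem_iSup_iff_exists_finset.mp hcB
    refine ⟨s.image Subtype.val, ?_, ?_⟩
    · intro m hm
      obtain ⟨⟨m', hm'⟩, _, rfl⟩ := Finset.mem_image.mp hm
      exact hm'
    · have hle : (⨆ i ∈ s, perpS (I i.1 : Set (Module.Dual k C)))
          ≤ (s.image Subtype.val).sup fun n => perpS (I n : Set (Module.Dual k C)) :=
        iSup₂_le fun i hi =>
          Finset.le_sup (f := fun n => perpS (I n : Set (Module.Dual k C)))
            (Finset.mem_image_of_mem Subtype.val hi)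
      exact hle hs
  -- the finite-rank restriction map determined by the `cs i`
  let ρ : Module.Dual k C →ₗ[k] (Fin nn → k) :=
    { toFun := fun g i => g (cs i)
      map_add' := fun a b => by funext i; simp
      map_smul' := fun a g => by funext i; simp }
  let V : ℕ →o Submodule k (Fin nn → k) :=
    ⟨fun N => Submodule.map ρ ((LN N).restrictScalars k),
      fun a b hab => Submodule.map_mono fun x hx => hLN_mono hab hx⟩
  obtain ⟨N₀, hstab⟩ := monotone_stabilizes_iff_noetherian.mpr inferInstance V
  by_cases hv : ρ 1 ∈ V N₀
  · -- then `1 ∈ J`, contradiction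
    obtain ⟨g, hg, hgf⟩ := hv
    have hgJ : g ∈ J := hLJ (le_iSup LN N₀ hg)
    have h1g : (1 : Module.Dual k C) - g ∈ J := by
      refine keyJ _ fun i => ?_
      rw [LinearMap.sub_apply, sub_eq_zero]
      exact (congrFun hgf i).symm
    have h1J : (1 : Module.Dual k C) ∈ J := by
      simpa using J.add_mem h1g hgJ
    exact hJco.1 ((Ideal.eq_top_iff_one J).mpr h1J)
  · obtain ⟨l, hl0, hl1⟩ := exists_functional _ hv
    set c : C := ∑ i, l (Pi.single i 1) • cs i with hcdef
    have key : ∀ g : Module.Dual k C, g c = l (ρ g) := fun g => eval_sum cs l g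
    have hcN : ∀ N, N₀ ≤ N → ∀ f ∈ LN N, f c = 0 := by
      intro N hN f hf
      have hρf : ρ f ∈ V N₀ := by
        rw [hstab N hN]
        exact ⟨f, hf, rfl⟩
      rw [key]
      exact hl0 _ hρf
    obtain ⟨G₀, hG₀N, hG₀c⟩ := hfour N₀ c (hcN N₀ le_rfl)
    set N₁ := max N₀ (G₀.sup id + 1) with hN₁def
    obtain ⟨G₁, hG₁N, hG₁c⟩ := hfour N₁ c (hcN N₁ (le_max_left _ _))
    have hdisj : ∀ m ∈ G₀, m ∉ G₁ := by
      intro m hm hm1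
      have h1 : m ≤ G₀.sup id := Finset.le_sup (f := id) hm
      have h2 : N₁ ≤ m := hG₁N m hm1
      have h3 : G₀.sup id + 1 ≤ N₁ := le_max_right _ _
      omega
    have hczero : c = 0 := disj_pair I hmax hpairwise G₀ G₁ hdisj c hG₀c hG₁c
    have hfin := key 1
    rw [hczero, map_zero, hl1] at hfin
    exact one_ne_zero hfin.symm

end Paper
end
end

section
/- Let k be a field, C a k-coalgebra and C* its dual convolution algebra, and suppose C* is injective as a left module over itself. Then every simple rational left C*-module embeds into C* as a left C*-module if and only if every rational left C*-module embeds into a direct product of copies of C* as a left C*-module. -/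
open TensorProduct Coalgebra

noncomputable section

namespace Paper

variable {k : Type*} [Field k] {C : Type*} [AddCommGroup C] [Module k C] [Coalgebra k C]

variable {k : Type*} [Field k] {C : Type*} [AddCommGroup C] [Module k C] [Coalgebra k C]

universe u v

section Aux

variable {k : Type*} [Field k] {C : Type*} [AddCommGroup C] [Module k C] [Coalgebra k C]

lemma smul_one_mul_smul_one' (a b : k) :
    (a • (1 : Module.Dual k C)) * (b • (1 : Module.Dual k C)) = (a * b) • 1 := by
  rw [smul_mul_assoc, one_mul, smul_smul]

lemma mul_smul_one_smul {M : Type*} [AddCommGroup M] [Module (Module.Dual k C) M]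
    (a b : k) (x : M) :
    ((a * b) • (1 : Module.Dual k C)) • x
      = (a • (1 : Module.Dual k C)) • ((b • (1 : Module.Dual k C)) • x) := by
  rw [← smul_one_mul_smul_one', mul_smul]

lemma hasRep_of_finset {M : Type*} [AddCommGroup M] [Module (Module.Dual k C) M]
    {α : Type*} (m : M) (s : Finset α) (ms : α → M) (cs : α → C)
    (h : ∀ f : Module.Dual k C, f • m = ∑ a ∈ s, (f (cs a) • (1 : Module.Dual k C)) • ms a) :
    ∃ (n : ℕ) (ms' : Fin n → M) (cs' : Fin n → C),
      ∀ f : Module.Dual k C, f • m = ∑ i, (f (cs' i) • (1 : Module.Dual k C)) • ms' i := by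
  refine ⟨s.card, fun i => ms (s.equivFin.symm i).1, fun i => cs (s.equivFin.symm i).1,
    fun f => ?_⟩
  rw [h f, ← Finset.sum_coe_sort s (fun a => (f (cs a) • (1 : Module.Dual k C)) • ms a)]
  exact (Equiv.sum_comp s.equivFin.symm
    (fun x : ↥s => (f (cs x.1) • (1 : Module.Dual k C)) • ms x.1)).symm

lemma exists_rep_mem_span {M : Type*} [AddCommGroup M] [Module (Module.Dual k C) M]
    (m : M) {n : ℕ} (ms : Fin n → M) (cs : Fin n → C)
    (h : ∀ f : Module.Dual k C, f • m = ∑ i, (f (cs i) • (1 : Module.Dual k C)) • ms i) :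
    ∃ (n' : ℕ) (ms' : Fin n' → M) (cs' : Fin n' → C),
      (∀ j, ms' j ∈ Submodule.span (Module.Dual k C) {m}) ∧
      ∀ f : Module.Dual k C, f • m = ∑ j, (f (cs' j) • (1 : Module.Dual k C)) • ms' j := by
  classical
  set W : Submodule k C := Submodule.span k (Set.range cs) with hW
  haveI : FiniteDimensional k W := FiniteDimensional.span_of_finite k (Set.finite_range cs)
  set d := Module.finrank k W with hd
  let b : Module.Basis (Fin d) k W := Module.finBasis k W
  let cw : Fin n → W := fun i => ⟨cs i, Submodule.subset_span (Set.mem_range_self i)⟩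
  let a : Fin n → Fin d → k := fun i j => b.repr (cw i) j
  have hcs : ∀ i (f : Module.Dual k C), f (cs i) = ∑ j, a i j * f (b j : C) := by
    intro i f
    have hrepr : ((∑ j, a i j • b j : W) : C) = cs i := by
      rw [b.sum_repr (cw i)]
    calc f (cs i) = f ((∑ j, a i j • b j : W) : C) := by rw [hrepr]
      _ = ∑ j, a i j * f (b j : C) := by
          rw [Submodule.coe_sum, map_sum]
          exact Finset.sum_congr rfl fun j _ => by
            rw [SetLike.val_smul, map_smul, smul_eq_mul]
  have hrep : ∀ f : Module.Dual k C,
      f • m = ∑ j, (f (b j : C) • (1 : Module.Dual k C)) •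
        (∑ i, (a i j • (1 : Module.Dual k C)) • ms i) := by
    intro f
    rw [h f]
    calc (∑ i, (f (cs i) • (1 : Module.Dual k C)) • ms i)
        = ∑ i, ((∑ j, a i j * f (b j : C)) • (1 : Module.Dual k C)) • ms i := by
          exact Finset.sum_congr rfl fun i _ => by rw [hcs i f]
      _ = ∑ i, ∑ j, ((a i j * f (b j : C)) • (1 : Module.Dual k C)) • ms i := by
          exact Finset.sum_congr rfl fun i _ => by
            rw [Finset.sum_smul, Finset.sum_smul]
      _ = ∑ j, ∑ i, ((a i j * f (b j : C)) • (1 : Module.Dual k C)) • ms i :=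
          Finset.sum_comm
      _ = ∑ j, (f (b j : C) • (1 : Module.Dual k C)) •
            (∑ i, (a i j • (1 : Module.Dual k C)) • ms i) := by
          refine Finset.sum_congr rfl fun j _ => ?_
          rw [Finset.smul_sum]
          refine Finset.sum_congr rfl fun i _ => ?_
          rw [← mul_smul_one_smul, mul_comm]
  refine ⟨d, fun j => ∑ i, (a i j • (1 : Module.Dual k C)) • ms i, fun j => (b j : C),
    fun j => ?_, hrep⟩
  obtain ⟨f, hf⟩ := LinearMap.exists_extend (b.coord j)
  have hfb : ∀ j', f (b j' : C) = if j' = j then 1 else 0 := by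
    intro j'
    have h1 : f ((b j' : C)) = b.coord j (b j') := by
      have h2 : ((b j' : C)) = W.subtype (b j') := rfl
      rw [h2, ← LinearMap.comp_apply, hf]
    rw [h1, Module.Basis.coord_apply, Module.Basis.repr_self, Finsupp.single_apply]
  have hthis := hrep f
  have hsum : (∑ j', (f (b j' : C) • (1 : Module.Dual k C)) •
      (∑ i, (a i j' • (1 : Module.Dual k C)) • ms i))
      = ∑ i, (a i j • (1 : Module.Dual k C)) • ms i := by
    rw [Finset.sum_eq_single j]
    · rw [hfb j, if_pos rfl, one_smul, one_smul]
    · intro j' _ hne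
      rw [hfb j', if_neg hne, zero_smul, zero_smul]
    · intro hj; exact absurd (Finset.mem_univ j) hj
  rw [hsum] at hthis
  show (∑ i, (a i j • (1 : Module.Dual k C)) • ms i) ∈ Submodule.span (Module.Dual k C) {m}
  rw [← hthis]
  exact Submodule.smul_mem _ f (Submodule.mem_span_singleton_self m)

lemma isRationalLeft_span_singleton {M : Type*} [AddCommGroup M]
    [Module (Module.Dual k C) M]
    (m : M) {n : ℕ} (ms : Fin n → M) (cs : Fin n → C)
    (hmem : ∀ i, ms i ∈ Submodule.span (Module.Dual k C) {m})
    (h : ∀ f : Module.Dual k C, f • m = ∑ i, (f (cs i) • (1 : Module.Dual k C)) • ms i) :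
    IsRationalLeft k C (Submodule.span (Module.Dual k C) {m}) := by
  classical
  intro s
  obtain ⟨g, hg⟩ := Submodule.mem_span_singleton.mp s.2
  choose T hT using fun i => TensorProduct.exists_finset (R := k) (comul (R := k) (cs i))
  have hq : ∀ (f : Module.Dual k C) i, ((f * g) (cs i) • (1 : Module.Dual k C)) • ms i
      = ∑ p ∈ T i, (f p.1 • (1 : Module.Dual k C)) •
          ((g p.2 • (1 : Module.Dual k C)) • ms i) := by
    intro f i
    have hmul : (f * g) (cs i) = ∑ p ∈ T i, f p.1 * g p.2 := by
      rw [dual_mul_apply, hT i, map_sum, map_sum]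
      exact Finset.sum_congr rfl fun p _ => by
        rw [TensorProduct.map_tmul, LinearMap.mul'_apply]
    rw [hmul, Finset.sum_smul, Finset.sum_smul]
    exact Finset.sum_congr rfl fun p _ => mul_smul_one_smul (f p.1) (g p.2) (ms i)
  have key : ∀ f : Module.Dual k C,
      f • s = ∑ q ∈ Finset.univ.sigma (fun i => T i),
        (f q.2.1 • (1 : Module.Dual k C)) •
          ((g q.2.2 • (1 : Module.Dual k C)) •
            (⟨ms q.1, hmem q.1⟩ : Submodule.span (Module.Dual k C) {m})) := by
    intro f
    rw [Subtype.ext_iff]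
    simp only [Submodule.coe_sum, SetLike.val_smul]
    rw [← hg, smul_smul, h (f * g), Finset.sum_sigma]
    exact Finset.sum_congr rfl fun i _ => hq f i
  obtain ⟨n', ms', cs', hrep⟩ := hasRep_of_finset s (Finset.univ.sigma fun i => T i)
    (fun q => (g q.2.2 • (1 : Module.Dual k C)) •
      (⟨ms q.1, hmem q.1⟩ : Submodule.span (Module.Dual k C) {m}))
    (fun q => q.2.1) key
  exact ⟨n', ms', cs', hrep⟩

end Aux

/-- Suppose `C*` is left self-injective. Then every simple rational left
`C*`-module embeds into `C*` iff every rational left `C*`-module embeds into a direct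
product of copies of `C*`. -/
theorem statement19 {k : Type u} [Field k] {C : Type u} [AddCommGroup C] [Module k C]
    [Coalgebra k C]
    (hinj : Module.Injective (Module.Dual k C) (Module.Dual k C)) :
    (∀ (T : Type v) [AddCommGroup T] [Module (Module.Dual k C) T],
        IsSimpleModule (Module.Dual k C) T → IsRationalLeft k C T →
        ∃ g : T →ₗ[Module.Dual k C] Module.Dual k C, Function.Injective g) ↔
      ∀ (M : Type v) [AddCommGroup M] [Module (Module.Dual k C) M],
        IsRationalLeft k C M →
        ∃ (ι : Type (max u v)) (g : M →ₗ[Module.Dual k C] (ι → Module.Dual k C)),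
          Function.Injective g := by
  classical
  constructor
  · intro hsimple M _ _ hM
    have key : ∀ m : M, m ≠ 0 →
        ∃ φ : M →ₗ[Module.Dual k C] Module.Dual k C, φ m ≠ 0 := by
      intro m hm
      -- Zorn: a submodule maximal with respect to not containing `m`
      have hzorn : ∀ c ⊆ {N : Submodule (Module.Dual k C) M | m ∉ N},
          IsChain (· ≤ ·) c → ∀ y ∈ c,
            ∃ ub ∈ {N : Submodule (Module.Dual k C) M | m ∉ N}, ∀ z ∈ c, z ≤ ub := by
        intro c hcs hchain y hy
        haveI : Nonempty c := ⟨⟨y, hy⟩⟩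
        refine ⟨sSup c, ?_, fun z hz => le_sSup hz⟩
        intro hmem
        obtain ⟨p, hp⟩ := (Submodule.mem_iSup_of_directed _ hchain.directed).mp
          (sSup_eq_iSup' c ▸ hmem)
        exact hcs p.2 hp
      obtain ⟨N, -, hNmax⟩ := zorn_le_nonempty₀ _ hzorn ⊥ (by simpa using hm)
      have hmN : m ∉ N := hNmax.1
      set π := N.mkQ with hπ
      have hmbar : π m ≠ 0 := fun h0 =>
        hmN ((Submodule.Quotient.mk_eq_zero N).mp h0)
      have hstep4 : ∀ P : Submodule (Module.Dual k C) (M ⧸ N), P ≠ ⊥ → π m ∈ P := by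
        intro P hP
        by_contra hmP
        have hNle : N ≤ P.comap π := Submodule.le_comap_mkQ N P
        have hcm : m ∉ P.comap π := fun hx => hmP (Submodule.mem_comap.mp hx)
        have heq : P.comap π = N := le_antisymm (hNmax.2 hcm hNle) hNle
        have hb : P = ⊥ := by
          rw [← Submodule.map_comap_eq_of_surjective (Submodule.mkQ_surjective N) P, heq,
            Submodule.mkQ_map_self]
        exact hP hb
      have hmS : π m ∈ Submodule.span (Module.Dual k C) {π m} :=
        Submodule.mem_span_singleton_self _
      have hSne : Submodule.span (Module.Dual k C) {π m} ≠ ⊥ := fun hbot =>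
        hmbar ((Submodule.mem_bot (Module.Dual k C)).mp (hbot ▸ hmS))
      have hatom : IsAtom (Submodule.span (Module.Dual k C) {π m}) := by
        refine ⟨hSne, fun b hb => ?_⟩
        by_contra hbne
        exact hb.not_ge (Submodule.span_le.mpr
          (Set.singleton_subset_iff.mpr (hstep4 b hbne)))
      haveI hsimpS : IsSimpleModule (Module.Dual k C)
          ↥(Submodule.span (Module.Dual k C) {π m}) :=
        isSimpleModule_iff_isAtom.mpr hatom
      obtain ⟨n0, ms0, cs0, h0⟩ := hM m
      have hq0 : ∀ f : Module.Dual k C,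
          f • (π m) = ∑ i, (f (cs0 i) • (1 : Module.Dual k C)) • (π (ms0 i)) := by
        intro f
        rw [← map_smul, h0 f, map_sum]
        exact Finset.sum_congr rfl fun i _ => map_smul _ _ _
      obtain ⟨n1, ms1, cs1, hmem1, h1⟩ :=
        exists_rep_mem_span (π m) (fun i => π (ms0 i)) cs0 hq0
      have hratS : IsRationalLeft k C ↥(Submodule.span (Module.Dual k C) {π m}) :=
        isRationalLeft_span_singleton (π m) ms1 cs1 hmem1 h1
      obtain ⟨g, hg⟩ := hsimple ↥(Submodule.span (Module.Dual k C) {π m}) hsimpS hratS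
      haveI := hinj
      obtain ⟨h2, hh2⟩ := Module.Injective.extension_property (Module.Dual k C)
        (Module.Dual k C) ↥(Submodule.span (Module.Dual k C) {π m}) (M ⧸ N)
        (Submodule.span (Module.Dual k C) {π m}).subtype
        (Submodule.injective_subtype _) g
      refine ⟨h2 ∘ₗ π, ?_⟩
      have heval : (h2 ∘ₗ π) m = g ⟨π m, hmS⟩ :=
        LinearMap.congr_fun hh2 ⟨π m, hmS⟩
      rw [heval]
      intro h0'
      have hz : (⟨π m, hmS⟩ : Submodule.span (Module.Dual k C) {π m}) = 0 :=
        hg (by rw [h0', map_zero])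
      exact hmbar (congrArg Subtype.val hz)
    let ψ : M → (M →ₗ[Module.Dual k C] Module.Dual k C) := fun m =>
      if hm : m = 0 then 0 else (key m hm).choose
    refine ⟨ULift.{u} M, LinearMap.pi (fun i : ULift.{u} M => ψ i.down), ?_⟩
    have hker : ∀ x : M,
        LinearMap.pi (fun i : ULift.{u} M => ψ i.down) x = 0 → x = 0 := by
      intro x hx
      by_contra hxne
      have hx0 : ψ x x = 0 := by
        have := congrFun hx (ULift.up x)
        simpa [LinearMap.pi_apply] using this
      rw [show ψ x = (key x hxne).choose from dif_neg hxne] at hx0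
      exact (key x hxne).choose_spec hx0
    intro a b hab
    have hsub : LinearMap.pi (fun i : ULift.{u} M => ψ i.down) (a - b) = 0 := by
      rw [map_sub, hab, sub_self]
    exact sub_eq_zero.mp (hker _ hsub)
  · intro hprod T _ _ hsimp hrat
    obtain ⟨ι, g, hg⟩ := hprod T hrat
    haveI := hsimp
    haveI : Nontrivial T := IsSimpleModule.nontrivial (Module.Dual k C) T
    obtain ⟨t, ht⟩ := exists_ne (0 : T)
    have hgt : g t ≠ 0 := fun h => ht (hg (by rw [h, map_zero]))
    obtain ⟨i, hi⟩ : ∃ i, g t i ≠ 0 := by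
      by_contra hall
      push_neg at hall
      exact hgt (funext hall)
    set p := (LinearMap.proj i :
      (ι → Module.Dual k C) →ₗ[Module.Dual k C] Module.Dual k C) ∘ₗ g with hp
    refine ⟨p, ?_⟩
    rcases eq_bot_or_eq_top (LinearMap.ker p) with hbot | htop
    · exact LinearMap.ker_eq_bot.mp hbot
    · exfalso
      have htk : t ∈ LinearMap.ker p := htop ▸ Submodule.mem_top
      have : p t = 0 := htk
      exact hi (by simpa [hp, LinearMap.proj_apply] using this)

end Paper
end
end
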